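/- For a real function φ that is five times differentiable at t, define J[φ](t) = φ'(t)·(φ'(t)²·φ⁽⁵⁾(t) − 5·φ'(t)·φ''(t)·φ⁽⁴⁾(t) + 5·φ''(t)²·φ'''(t)) / (2·φ'(t)·φ'''(t) − 3·φ''(t)²)². Let A, B, a, b, c, d ∈ ℝ with B ≠ 0 and ad − bc = 1, let t₀ ∈ ℝ and set t₁ = A + B·t₀. Let ψ : ℝ → ℝ be five times continuously differentiable on an open neighborhood of t₁ with c·ψ + d nonvanishing on that neighborhood, and assume 2·ψ'(t₁)·ψ'''(t₁) − 3·ψ''(t₁)² ≠ 0. Define ψ₂(t) = sgn(B)·(a·ψ(A + B t) + b)/(c·ψ(A + B t) + d), where sgn(B) = B/|B|. Then J[ψ₂](t₀) = J[ψ](t₁). -/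

import Mathlib

lemma invJ_aux (B c w p1 p2 p3 p4 p5 s : ℝ) (hB : B ≠ 0) (hw : w ≠ 0) (hs0 : s ≠ 0)
    (hD : 2 * p1 * p3 - 3 * p2 ^ 2 ≠ 0) :
    s * B * p1 / w ^ 2 *
        ((s * B * p1 / w ^ 2) ^ 2 *
            (s * B ^ 5 *
                (p5 * w ^ 4 - 10 * c * p4 * p1 * w ^ 3 - 20 * c * p3 * p2 * w ^ 3 +
                      60 * c ^ 2 * p3 * p1 ^ 2 * w ^ 2 + 90 * c ^ 2 * p2 ^ 2 * p1 * w ^ 2 -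
                      240 * c ^ 3 * p2 * p1 ^ 3 * w + 120 * c ^ 4 * p1 ^ 5) / w ^ 6)
          - 5 * (s * B * p1 / w ^ 2) *
              (s * B ^ 2 * (p2 * w - 2 * c * p1 ^ 2) / w ^ 3) *
              (s * B ^ 4 *
                (p4 * w ^ 3 - 8 * c * p3 * p1 * w ^ 2 - 6 * c * p2 ^ 2 * w ^ 2 +
                    36 * c ^ 2 * p2 * p1 ^ 2 * w - 24 * c ^ 3 * p1 ^ 4) / w ^ 5)
          + 5 * (s * B ^ 2 * (p2 * w - 2 * c * p1 ^ 2) / w ^ 3) ^ 2 *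
              (s * B ^ 3 * (p3 * w ^ 2 - 6 * c * p2 * p1 * w + 6 * c ^ 2 * p1 ^ 3) / w ^ 4)) /
      (2 * (s * B * p1 / w ^ 2) *
          (s * B ^ 3 * (p3 * w ^ 2 - 6 * c * p2 * p1 * w + 6 * c ^ 2 * p1 ^ 3) / w ^ 4) -
        3 * (s * B ^ 2 * (p2 * w - 2 * c * p1 ^ 2) / w ^ 3) ^ 2) ^ 2
    = p1 * (p1 ^ 2 * p5 - 5 * p1 * p2 * p4 + 5 * p2 ^ 2 * p3) /
        (2 * p1 * p3 - 3 * p2 ^ 2) ^ 2 := by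
  have hden : 2 * (s * B * p1 / w ^ 2) *
          (s * B ^ 3 * (p3 * w ^ 2 - 6 * c * p2 * p1 * w + 6 * c ^ 2 * p1 ^ 3) / w ^ 4) -
        3 * (s * B ^ 2 * (p2 * w - 2 * c * p1 ^ 2) / w ^ 3) ^ 2
      = s ^ 2 * B ^ 4 * (2 * p1 * p3 - 3 * p2 ^ 2) / w ^ 4 := by
    field_simp
    ring
  have hne : s ^ 2 * B ^ 4 * (2 * p1 * p3 - 3 * p2 ^ 2) / w ^ 4 ≠ 0 :=
    div_ne_zero (mul_ne_zero (mul_ne_zero (pow_ne_zero 2 hs0) (pow_ne_zero 4 hB)) hD)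
      (pow_ne_zero 4 hw)
  rw [hden, div_eq_div_iff (pow_ne_zero 2 hne) (pow_ne_zero 2 hD)]
  field_simp
  ring


/-- The second generating differential invariant
`J[φ] = φ'·(φ'²φ⁽⁵⁾ - 5φ'φ''φ⁽⁴⁾ + 5φ''²φ''') / (2φ'φ''' - 3φ''²)²`. -/
noncomputable def invJ (φ : ℝ → ℝ) (t : ℝ) : ℝ :=
  deriv φ t * ((deriv φ t) ^ 2 * iteratedDeriv 5 φ t
      - 5 * deriv φ t * iteratedDeriv 2 φ t * iteratedDeriv 4 φ t
      + 5 * (iteratedDeriv 2 φ t) ^ 2 * iteratedDeriv 3 φ t) /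
    (2 * deriv φ t * iteratedDeriv 3 φ t - 3 * (iteratedDeriv 2 φ t) ^ 2) ^ 2

/-- Invariance of `J` under the action `ψ₂(t) = sgn(B)·(aψ(A+Bt)+b)/(cψ(A+Bt)+d)`
of `SAff₁(ℝ) × PSL₂(ℝ) × ℤ₂`. -/
theorem stmt_7 (A B a b c d : ℝ) (hB : B ≠ 0) (hdet : a * d - b * c = 1)
    (t₀ t₁ : ℝ) (ht₁ : t₁ = A + B * t₀)
    (ψ : ℝ → ℝ) (U : Set ℝ) (hU : IsOpen U) (ht₁U : t₁ ∈ U)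
    (hψ : ContDiffOn ℝ 5 ψ U) (hcd : ∀ x ∈ U, c * ψ x + d ≠ 0)
    (hnd : 2 * deriv ψ t₁ * iteratedDeriv 3 ψ t₁ - 3 * (iteratedDeriv 2 ψ t₁) ^ 2 ≠ 0)
    (ψ₂ : ℝ → ℝ)
    (hψ₂ : ∀ t, ψ₂ t = (B / |B|) * ((a * ψ (A + B * t) + b) / (c * ψ (A + B * t) + d))) :
    invJ ψ₂ t₀ = invJ ψ t₁ := by
  have ht₀U : A + B * t₀ ∈ U := by rw [← ht₁]; exact ht₁U
  obtain ⟨s, hsdef⟩ : ∃ s : ℝ, s = B / |B| := ⟨_, rfl⟩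
  rw [← hsdef] at hψ₂
  have hs0 : s ≠ 0 := by rw [hsdef]; exact div_ne_zero hB (abs_ne_zero.mpr hB)
  -- smoothness chain
  have key : ∀ k : ℕ, k ≤ 4 → ContDiffOn ℝ ((5 - k : ℕ) : ℕ∞) (iteratedDeriv k ψ) U := by
    intro k
    induction k with
    | zero => intro _; exact_mod_cast hψ
    | succ n ih =>
      intro h
      have h' := ih (by omega)
      rw [iteratedDeriv_succ]
      exact h'.deriv_of_isOpen hU (by norm_cast; omega)
  have hdk : ∀ k : ℕ, k ≤ 4 → ∀ x ∈ U,
      HasDerivAt (iteratedDeriv k ψ) (iteratedDeriv (k + 1) ψ x) x := by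
    intro k hk x hx
    have h1 : DifferentiableAt ℝ (iteratedDeriv k ψ) x :=
      ((key k hk).differentiableOn (by norm_cast; omega)).differentiableAt (hU.mem_nhds hx)
    rw [iteratedDeriv_succ]
    exact h1.hasDerivAt
  have haff : ∀ t : ℝ, HasDerivAt (fun u : ℝ => A + B * u) B t := by
    intro t
    simpa using ((hasDerivAt_id t).const_mul B).const_add A
  have hq : ∀ k : ℕ, k ≤ 4 → ∀ t : ℝ, A + B * t ∈ U →
      HasDerivAt (fun u => iteratedDeriv k ψ (A + B * u))
        (B * iteratedDeriv (k + 1) ψ (A + B * t)) t := by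
    intro k hk t ht
    have h := (hdk k hk _ ht).comp t (haff t)
    simpa [Function.comp_def, mul_comm] using h
  have hψA : ∀ t : ℝ, A + B * t ∈ U →
      HasDerivAt (fun u => ψ (A + B * u)) (B * iteratedDeriv 1 ψ (A + B * t)) t := by
    intro t ht
    have h := hq 0 (by norm_num) t ht
    simpa [iteratedDeriv_zero] using h
  have hW : ∀ t : ℝ, A + B * t ∈ U → c * ψ (A + B * t) + d ≠ 0 := fun t ht => hcd _ ht
  have hWd : ∀ t : ℝ, A + B * t ∈ U →
      HasDerivAt (fun u => c * ψ (A + B * u) + d)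
        (c * (B * iteratedDeriv 1 ψ (A + B * t))) t :=
    fun t ht => ((hψA t ht).const_mul c).add_const d
  have hψ₂eq : ψ₂ = fun u => s * ((a * ψ (A + B * u) + b) / (c * ψ (A + B * u) + d)) :=
    funext fun u => hψ₂ u
  -- first derivative
  have H1 : ∀ t : ℝ, A + B * t ∈ U → HasDerivAt ψ₂
      (s * B * iteratedDeriv 1 ψ (A + B * t) / (c * ψ (A + B * t) + d) ^ 2) t := by
    intro t ht
    rw [hψ₂eq]
    have h := ((((hψA t ht).const_mul a).add_const b).div (hWd t ht) (hW t ht)).const_mul s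
    have hnum : a * (B * iteratedDeriv 1 ψ (A + B * t)) * (c * ψ (A + B * t) + d) -
        (a * ψ (A + B * t) + b) * (c * (B * iteratedDeriv 1 ψ (A + B * t)))
        = B * iteratedDeriv 1 ψ (A + B * t) := by
      linear_combination B * iteratedDeriv 1 ψ (A + B * t) * hdet
    rw [hnum] at h
    refine h.congr_deriv ?_
    ring
  -- second derivative
  have H2 : ∀ t : ℝ, A + B * t ∈ U → HasDerivAt
      (fun u => s * B * iteratedDeriv 1 ψ (A + B * u) / (c * ψ (A + B * u) + d) ^ 2)
      (s * B ^ 2 * (iteratedDeriv 2 ψ (A + B * t) * (c * ψ (A + B * t) + d)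
          - 2 * c * iteratedDeriv 1 ψ (A + B * t) ^ 2) / (c * ψ (A + B * t) + d) ^ 3) t := by
    intro t ht
    have h := ((hq 1 (by norm_num) t ht).const_mul (s * B)).div ((hWd t ht).pow 2)
      (pow_ne_zero 2 (hW t ht))
    refine h.congr_deriv ?_
    have hw := hW t ht
    simp only [Pi.pow_apply]
    field_simp
    ring
  -- third derivative
  have H3 : ∀ t : ℝ, A + B * t ∈ U → HasDerivAt
      (fun u => s * B ^ 2 * (iteratedDeriv 2 ψ (A + B * u) * (c * ψ (A + B * u) + d)
          - 2 * c * iteratedDeriv 1 ψ (A + B * u) ^ 2) / (c * ψ (A + B * u) + d) ^ 3)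
      (s * B ^ 3 * (iteratedDeriv 3 ψ (A + B * t) * (c * ψ (A + B * t) + d) ^ 2
          - 6 * c * iteratedDeriv 2 ψ (A + B * t) * iteratedDeriv 1 ψ (A + B * t)
              * (c * ψ (A + B * t) + d)
          + 6 * c ^ 2 * iteratedDeriv 1 ψ (A + B * t) ^ 3) / (c * ψ (A + B * t) + d) ^ 4) t := by
    intro t ht
    have h := ((((hq 2 (by norm_num) t ht).mul (hWd t ht)).sub
        (((hq 1 (by norm_num) t ht).pow 2).const_mul (2 * c))).const_mul (s * B ^ 2)).div
      ((hWd t ht).pow 3) (pow_ne_zero 3 (hW t ht))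
    refine h.congr_deriv ?_
    have hw := hW t ht
    simp only [Pi.pow_apply, Pi.mul_apply, Pi.sub_apply, Pi.add_apply]
    field_simp
    ring
  -- fourth derivative
  have H4 : ∀ t : ℝ, A + B * t ∈ U → HasDerivAt
      (fun u => s * B ^ 3 * (iteratedDeriv 3 ψ (A + B * u) * (c * ψ (A + B * u) + d) ^ 2
          - 6 * c * iteratedDeriv 2 ψ (A + B * u) * iteratedDeriv 1 ψ (A + B * u)
              * (c * ψ (A + B * u) + d)
          + 6 * c ^ 2 * iteratedDeriv 1 ψ (A + B * u) ^ 3) / (c * ψ (A + B * u) + d) ^ 4)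
      (s * B ^ 4 * (iteratedDeriv 4 ψ (A + B * t) * (c * ψ (A + B * t) + d) ^ 3
          - 8 * c * iteratedDeriv 3 ψ (A + B * t) * iteratedDeriv 1 ψ (A + B * t)
              * (c * ψ (A + B * t) + d) ^ 2
          - 6 * c * iteratedDeriv 2 ψ (A + B * t) ^ 2 * (c * ψ (A + B * t) + d) ^ 2
          + 36 * c ^ 2 * iteratedDeriv 2 ψ (A + B * t) * iteratedDeriv 1 ψ (A + B * t) ^ 2
              * (c * ψ (A + B * t) + d)
          - 24 * c ^ 3 * iteratedDeriv 1 ψ (A + B * t) ^ 4) / (c * ψ (A + B * t) + d) ^ 5) t := by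
    intro t ht
    have h := (((((hq 3 (by norm_num) t ht).mul ((hWd t ht).pow 2)).sub
          ((((hq 2 (by norm_num) t ht).const_mul (6 * c)).mul
            (hq 1 (by norm_num) t ht)).mul (hWd t ht))).add
          (((hq 1 (by norm_num) t ht).pow 3).const_mul (6 * c ^ 2))).const_mul (s * B ^ 3)).div
      ((hWd t ht).pow 4) (pow_ne_zero 4 (hW t ht))
    refine h.congr_deriv ?_
    have hw := hW t ht
    simp only [Pi.pow_apply, Pi.mul_apply, Pi.sub_apply, Pi.add_apply]
    field_simp
    ring
  -- fifth derivative
  have H5 : ∀ t : ℝ, A + B * t ∈ U → HasDerivAt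
      (fun u => s * B ^ 4 * (iteratedDeriv 4 ψ (A + B * u) * (c * ψ (A + B * u) + d) ^ 3
          - 8 * c * iteratedDeriv 3 ψ (A + B * u) * iteratedDeriv 1 ψ (A + B * u)
              * (c * ψ (A + B * u) + d) ^ 2
          - 6 * c * iteratedDeriv 2 ψ (A + B * u) ^ 2 * (c * ψ (A + B * u) + d) ^ 2
          + 36 * c ^ 2 * iteratedDeriv 2 ψ (A + B * u) * iteratedDeriv 1 ψ (A + B * u) ^ 2
              * (c * ψ (A + B * u) + d)
          - 24 * c ^ 3 * iteratedDeriv 1 ψ (A + B * u) ^ 4) / (c * ψ (A + B * u) + d) ^ 5)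
      (s * B ^ 5 * (iteratedDeriv 5 ψ (A + B * t) * (c * ψ (A + B * t) + d) ^ 4
          - 10 * c * iteratedDeriv 4 ψ (A + B * t) * iteratedDeriv 1 ψ (A + B * t)
              * (c * ψ (A + B * t) + d) ^ 3
          - 20 * c * iteratedDeriv 3 ψ (A + B * t) * iteratedDeriv 2 ψ (A + B * t)
              * (c * ψ (A + B * t) + d) ^ 3
          + 60 * c ^ 2 * iteratedDeriv 3 ψ (A + B * t) * iteratedDeriv 1 ψ (A + B * t) ^ 2
              * (c * ψ (A + B * t) + d) ^ 2
          + 90 * c ^ 2 * iteratedDeriv 2 ψ (A + B * t) ^ 2 * iteratedDeriv 1 ψ (A + B * t)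
              * (c * ψ (A + B * t) + d) ^ 2
          - 240 * c ^ 3 * iteratedDeriv 2 ψ (A + B * t) * iteratedDeriv 1 ψ (A + B * t) ^ 3
              * (c * ψ (A + B * t) + d)
          + 120 * c ^ 4 * iteratedDeriv 1 ψ (A + B * t) ^ 5) / (c * ψ (A + B * t) + d) ^ 6) t := by
    intro t ht
    have h := (((((((hq 4 (by norm_num) t ht).mul ((hWd t ht).pow 3)).sub
          ((((hq 3 (by norm_num) t ht).const_mul (8 * c)).mul
            (hq 1 (by norm_num) t ht)).mul ((hWd t ht).pow 2))).sub
          ((((hq 2 (by norm_num) t ht).pow 2).const_mul (6 * c)).mul ((hWd t ht).pow 2))).add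
          ((((hq 2 (by norm_num) t ht).const_mul (36 * c ^ 2)).mul
            ((hq 1 (by norm_num) t ht).pow 2)).mul (hWd t ht))).sub
          (((hq 1 (by norm_num) t ht).pow 4).const_mul (24 * c ^ 3))).const_mul (s * B ^ 4)).div
      ((hWd t ht).pow 5) (pow_ne_zero 5 (hW t ht))
    refine h.congr_deriv ?_
    have hw := hW t ht
    simp only [Pi.pow_apply, Pi.mul_apply, Pi.sub_apply, Pi.add_apply]
    field_simp
    ring
  -- identify the iterated derivatives of ψ₂
  have hVmem : ∀ t : ℝ, A + B * t ∈ U → {u : ℝ | A + B * u ∈ U} ∈ nhds t := by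
    intro t ht
    exact (hU.preimage (by continuity)).mem_nhds ht
  have D1 : ∀ t : ℝ, A + B * t ∈ U → deriv ψ₂ t
      = s * B * iteratedDeriv 1 ψ (A + B * t) / (c * ψ (A + B * t) + d) ^ 2 :=
    fun t ht => (H1 t ht).deriv
  have D2 : ∀ t : ℝ, A + B * t ∈ U → iteratedDeriv 2 ψ₂ t
      = s * B ^ 2 * (iteratedDeriv 2 ψ (A + B * t) * (c * ψ (A + B * t) + d)
          - 2 * c * iteratedDeriv 1 ψ (A + B * t) ^ 2) / (c * ψ (A + B * t) + d) ^ 3 := by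
    intro t ht
    have he : deriv ψ₂ =ᶠ[nhds t]
        (fun u => s * B * iteratedDeriv 1 ψ (A + B * u) / (c * ψ (A + B * u) + d) ^ 2) :=
      Filter.eventuallyEq_of_mem (hVmem t ht) (fun x hx => D1 x hx)
    have e2 : iteratedDeriv 2 ψ₂ t = deriv (deriv ψ₂) t := by
      show iteratedDeriv (1 + 1) ψ₂ t = _
      rw [iteratedDeriv_succ, iteratedDeriv_one]
    rw [e2, he.deriv_eq]
    exact (H2 t ht).deriv
  have D3 : ∀ t : ℝ, A + B * t ∈ U → iteratedDeriv 3 ψ₂ t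
      = s * B ^ 3 * (iteratedDeriv 3 ψ (A + B * t) * (c * ψ (A + B * t) + d) ^ 2
          - 6 * c * iteratedDeriv 2 ψ (A + B * t) * iteratedDeriv 1 ψ (A + B * t)
              * (c * ψ (A + B * t) + d)
          + 6 * c ^ 2 * iteratedDeriv 1 ψ (A + B * t) ^ 3) / (c * ψ (A + B * t) + d) ^ 4 := by
    intro t ht
    have he : iteratedDeriv 2 ψ₂ =ᶠ[nhds t]
        (fun u => s * B ^ 2 * (iteratedDeriv 2 ψ (A + B * u) * (c * ψ (A + B * u) + d)
          - 2 * c * iteratedDeriv 1 ψ (A + B * u) ^ 2) / (c * ψ (A + B * u) + d) ^ 3) :=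
      Filter.eventuallyEq_of_mem (hVmem t ht) (fun x hx => D2 x hx)
    have e3 : iteratedDeriv 3 ψ₂ t = deriv (iteratedDeriv 2 ψ₂) t := by
      show iteratedDeriv (2 + 1) ψ₂ t = _
      rw [iteratedDeriv_succ]
    rw [e3, he.deriv_eq]
    exact (H3 t ht).deriv
  have D4 : ∀ t : ℝ, A + B * t ∈ U → iteratedDeriv 4 ψ₂ t
      = s * B ^ 4 * (iteratedDeriv 4 ψ (A + B * t) * (c * ψ (A + B * t) + d) ^ 3
          - 8 * c * iteratedDeriv 3 ψ (A + B * t) * iteratedDeriv 1 ψ (A + B * t)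
              * (c * ψ (A + B * t) + d) ^ 2
          - 6 * c * iteratedDeriv 2 ψ (A + B * t) ^ 2 * (c * ψ (A + B * t) + d) ^ 2
          + 36 * c ^ 2 * iteratedDeriv 2 ψ (A + B * t) * iteratedDeriv 1 ψ (A + B * t) ^ 2
              * (c * ψ (A + B * t) + d)
          - 24 * c ^ 3 * iteratedDeriv 1 ψ (A + B * t) ^ 4) / (c * ψ (A + B * t) + d) ^ 5 := by
    intro t ht
    have he : iteratedDeriv 3 ψ₂ =ᶠ[nhds t]
        (fun u => s * B ^ 3 * (iteratedDeriv 3 ψ (A + B * u) * (c * ψ (A + B * u) + d) ^ 2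
          - 6 * c * iteratedDeriv 2 ψ (A + B * u) * iteratedDeriv 1 ψ (A + B * u)
              * (c * ψ (A + B * u) + d)
          + 6 * c ^ 2 * iteratedDeriv 1 ψ (A + B * u) ^ 3) / (c * ψ (A + B * u) + d) ^ 4) :=
      Filter.eventuallyEq_of_mem (hVmem t ht) (fun x hx => D3 x hx)
    have e4 : iteratedDeriv 4 ψ₂ t = deriv (iteratedDeriv 3 ψ₂) t := by
      show iteratedDeriv (3 + 1) ψ₂ t = _
      rw [iteratedDeriv_succ]
    rw [e4, he.deriv_eq]
    exact (H4 t ht).deriv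
  have D5 : ∀ t : ℝ, A + B * t ∈ U → iteratedDeriv 5 ψ₂ t
      = s * B ^ 5 * (iteratedDeriv 5 ψ (A + B * t) * (c * ψ (A + B * t) + d) ^ 4
          - 10 * c * iteratedDeriv 4 ψ (A + B * t) * iteratedDeriv 1 ψ (A + B * t)
              * (c * ψ (A + B * t) + d) ^ 3
          - 20 * c * iteratedDeriv 3 ψ (A + B * t) * iteratedDeriv 2 ψ (A + B * t)
              * (c * ψ (A + B * t) + d) ^ 3
          + 60 * c ^ 2 * iteratedDeriv 3 ψ (A + B * t) * iteratedDeriv 1 ψ (A + B * t) ^ 2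
              * (c * ψ (A + B * t) + d) ^ 2
          + 90 * c ^ 2 * iteratedDeriv 2 ψ (A + B * t) ^ 2 * iteratedDeriv 1 ψ (A + B * t)
              * (c * ψ (A + B * t) + d) ^ 2
          - 240 * c ^ 3 * iteratedDeriv 2 ψ (A + B * t) * iteratedDeriv 1 ψ (A + B * t) ^ 3
              * (c * ψ (A + B * t) + d)
          + 120 * c ^ 4 * iteratedDeriv 1 ψ (A + B * t) ^ 5) / (c * ψ (A + B * t) + d) ^ 6 := by
    intro t ht
    have he : iteratedDeriv 4 ψ₂ =ᶠ[nhds t]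
        (fun u => s * B ^ 4 * (iteratedDeriv 4 ψ (A + B * u) * (c * ψ (A + B * u) + d) ^ 3
          - 8 * c * iteratedDeriv 3 ψ (A + B * u) * iteratedDeriv 1 ψ (A + B * u)
              * (c * ψ (A + B * u) + d) ^ 2
          - 6 * c * iteratedDeriv 2 ψ (A + B * u) ^ 2 * (c * ψ (A + B * u) + d) ^ 2
          + 36 * c ^ 2 * iteratedDeriv 2 ψ (A + B * u) * iteratedDeriv 1 ψ (A + B * u) ^ 2
              * (c * ψ (A + B * u) + d)
          - 24 * c ^ 3 * iteratedDeriv 1 ψ (A + B * u) ^ 4) / (c * ψ (A + B * u) + d) ^ 5) :=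
      Filter.eventuallyEq_of_mem (hVmem t ht) (fun x hx => D4 x hx)
    have e5 : iteratedDeriv 5 ψ₂ t = deriv (iteratedDeriv 4 ψ₂) t := by
      show iteratedDeriv (4 + 1) ψ₂ t = _
      rw [iteratedDeriv_succ]
    rw [e5, he.deriv_eq]
    exact (H5 t ht).deriv
  -- final algebraic computation
  have ht0 : A + B * t₀ = t₁ := ht₁.symm
  simp only [invJ]
  rw [D1 t₀ ht₀U, D2 t₀ ht₀U, D3 t₀ ht₀U, D4 t₀ ht₀U, D5 t₀ ht₀U, ht0]
  simp only [iteratedDeriv_one]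
  exact invJ_aux B c (c * ψ t₁ + d) (deriv ψ t₁) (iteratedDeriv 2 ψ t₁)
    (iteratedDeriv 3 ψ t₁) (iteratedDeriv 4 ψ t₁) (iteratedDeriv 5 ψ t₁) s hB
    (hcd _ ht₁U) hs0 hnd
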